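/- For all integers n and m: (-1)^n * L_n^2 + (-1)^m * L_m^2 + (-1)^{m+n} * L_{m+n}^2 = (-1)^{m+n} * L_n * L_m * L_{m+n} + 4. -/

import Mathlib

def lucas : ℕ → ℕ
  | 0 => 2
  | 1 => 1
  | n + 2 => lucas (n + 1) + lucas n

def lucasZ (n : ℤ) : ℤ :=
  if 0 ≤ n then (lucas n.toNat : ℤ) else (-1) ^ n.natAbs * (lucas n.natAbs : ℤ)

/-- Fibonacci extended to the integers. -/
def fibZ (n : ℤ) : ℤ :=
  if 0 ≤ n then (Nat.fib n.toNat : ℤ) else (-1) ^ (n.natAbs + 1) * (Nat.fib n.natAbs : ℤ)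

/-- sign -/
def E (n : ℤ) : ℤ := (((-1 : ℤˣ) ^ n : ℤˣ) : ℤ)

lemma E_add (m n : ℤ) : E (m + n) = E m * E n := by
  simp [E, zpow_add]

lemma E_add_one (n : ℤ) : E (n + 1) = -E n := by
  simp [E, zpow_add]

lemma E_sub_one (n : ℤ) : E (n - 1) = -E n := by
  have h := E_add_one (n - 1)
  rw [show n - 1 + 1 = n by ring] at h
  linarith

lemma E_sq (n : ℤ) : E n ^ 2 = 1 := by
  rcases Int.units_eq_one_or ((-1 : ℤˣ) ^ n) with h | h <;> simp [E, h]

lemma fibZ_natCast (k : ℕ) : fibZ (k : ℤ) = (Nat.fib k : ℤ) := by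
  simp [fibZ]

lemma fibZ_neg (k : ℕ) : fibZ (-(k : ℤ) - 1) = (-1) ^ k * (Nat.fib (k + 1) : ℤ) := by
  have h : ¬ (0 ≤ -(k : ℤ) - 1) := by omega
  have h2 : (-(k : ℤ) - 1).natAbs = k + 1 := by omega
  rw [fibZ, if_neg h, h2, pow_succ, pow_succ]
  ring

lemma fibZ_zero : fibZ 0 = 0 := by simp [fibZ]

lemma fibZ_one : fibZ 1 = 1 := by simp [fibZ]

lemma fibZ_rec (n : ℤ) : fibZ (n + 1) = fibZ n + fibZ (n - 1) := by
  rcases le_or_gt 1 n with h | h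
  · obtain ⟨k, rfl⟩ : ∃ k : ℕ, n = (k : ℤ) + 1 := ⟨(n - 1).toNat, by omega⟩
    rw [show (k : ℤ) + 1 + 1 = ((k + 2 : ℕ) : ℤ) by push_cast; ring,
      show ((k : ℤ) + 1 : ℤ) - 1 = ((k : ℕ) : ℤ) by push_cast; ring,
      show (k : ℤ) + 1 = ((k + 1 : ℕ) : ℤ) by push_cast; ring,
      fibZ_natCast, fibZ_natCast, fibZ_natCast, Nat.fib_add_two]
    push_cast; ring
  · rcases eq_or_lt_of_le (show n ≤ 0 by omega) with h0 | h0
    · subst h0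
      rw [show (0 : ℤ) + 1 = ((1 : ℕ) : ℤ) by norm_num,
        show (0 : ℤ) - 1 = -(((0 : ℕ) : ℤ)) - 1 by norm_num,
        show (0 : ℤ) = ((0 : ℕ) : ℤ) by norm_num, fibZ_natCast, fibZ_natCast, fibZ_neg]
      norm_num
    · rcases eq_or_lt_of_le (show n ≤ -1 by omega) with h1 | h1
      · subst h1
        rw [show (-1 : ℤ) + 1 = ((0 : ℕ) : ℤ) by norm_num,
          show (-1 : ℤ) - 1 = -(((1 : ℕ) : ℤ)) - 1 by norm_num,
          show (-1 : ℤ) = -(((0 : ℕ) : ℤ)) - 1 by norm_num,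
          fibZ_natCast, fibZ_neg, fibZ_neg]
        norm_num
      · obtain ⟨k, rfl⟩ : ∃ k : ℕ, n = -((k : ℤ)) - 2 := ⟨(-n - 2).toNat, by omega⟩
        rw [show -((k : ℤ)) - 2 + 1 = -((k : ℕ) : ℤ) - 1 by ring,
          show -((k : ℤ)) - 2 - 1 = -(((k + 2 : ℕ) : ℤ)) - 1 by push_cast; ring,
          show -((k : ℤ)) - 2 = -(((k + 1 : ℕ) : ℤ)) - 1 by push_cast; ring,
          fibZ_neg, fibZ_neg, fibZ_neg]
        have hf : Nat.fib (k + 2 + 1) = Nat.fib (k + 1) + Nat.fib (k + 1 + 1) := by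
          rw [show k + 2 + 1 = (k + 1) + 2 by ring, Nat.fib_add_two]
        rw [hf]
        push_cast
        ring

lemma fibZ_rec' (n : ℤ) : fibZ (n + 2) = fibZ (n + 1) + fibZ n := by
  have h := fibZ_rec (n + 1)
  rw [show n + 1 + 1 = n + 2 by ring, show n + 1 - 1 = n by ring] at h
  exact h

lemma cassini (n : ℤ) : fibZ (n + 1) * fibZ (n - 1) - fibZ n ^ 2 = E n := by
  induction n using Int.induction_on with
  | zero =>
    rw [show (0 : ℤ) + 1 = 1 by norm_num,
      show (0 : ℤ) - 1 = -(((0 : ℕ) : ℤ)) - 1 by norm_num, fibZ_one, fibZ_neg, fibZ_zero]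
    simp [E]
  | succ k ih =>
    have h1 := fibZ_rec ((k : ℤ) + 1)
    have h2 := fibZ_rec (k : ℤ)
    rw [show (k : ℤ) + 1 - 1 = k by ring] at h1
    rw [show (k : ℤ) + 1 - 1 = k by ring, E_add_one]
    linear_combination fibZ (k : ℤ) * h1 - fibZ ((k : ℤ) + 1) * h2 - ih
  | pred k ih =>
    have h1 := fibZ_rec (-(k : ℤ))
    have h2 := fibZ_rec (-(k : ℤ) - 1)
    rw [show -(k : ℤ) - 1 + 1 = -(k : ℤ) by ring,
        show -(k : ℤ) - 1 - 1 = -(k : ℤ) - 2 by ring] at h2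
    rw [show (-(k : ℤ) - 1) + 1 = -(k : ℤ) by ring,
        show (-(k : ℤ) - 1) - 1 = -(k : ℤ) - 2 by ring, E_sub_one]
    linear_combination fibZ (-(k : ℤ) - 1) * h1 - fibZ (-(k : ℤ)) * h2 - ih

lemma fib_add (n m : ℤ) :
    fibZ (m + n) = fibZ m * fibZ (n + 1) + fibZ (m - 1) * fibZ n := by
  induction n using Int.induction_on generalizing m with
  | zero =>
    rw [show (0 : ℤ) + 1 = 1 by ring, fibZ_one, fibZ_zero, show m + 0 = m by ring]
    ring
  | succ k ih =>
    have h := ih (m + 1)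
    rw [show m + 1 + k = m + ((k : ℤ) + 1) by ring, show m + 1 - 1 = m by ring] at h
    have hm' := fibZ_rec m
    have hk := fibZ_rec' (k : ℤ)
    rw [h, hm', show (k : ℤ) + 1 + 1 = (k : ℤ) + 2 by ring, hk]
    ring
  | pred k ih =>
    have h := ih (m - 1)
    rw [show m - 1 + -(k : ℤ) = m + (-(k : ℤ) - 1) by ring] at h
    rw [show -(k : ℤ) - 1 + 1 = -(k : ℤ) by ring]
    have hm : fibZ m = fibZ (m - 1) + fibZ (m - 1 - 1) := by
      have := fibZ_rec (m - 1)
      rw [show m - 1 + 1 = m by ring] at this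
      exact this
    have hk := fibZ_rec (-(k : ℤ))
    linear_combination h - fibZ (-(k : ℤ)) * hm + fibZ (m - 1) * hk

lemma lucas_succ (k : ℕ) : lucas (k + 1) = Nat.fib (k + 2) + Nat.fib k := by
  induction k using Nat.twoStepInduction with
  | zero => decide
  | one => decide
  | more k ih1 ih2 =>
    have hl : lucas (k + 2 + 1) = lucas (k + 1 + 1) + lucas (k + 1) := rfl
    rw [hl, ih1, ih2]
    have h1 : Nat.fib (k + 2 + 2) = Nat.fib (k + 2) + Nat.fib (k + 2 + 1) := Nat.fib_add_two
    have h2 : Nat.fib (k + 1 + 2) = Nat.fib (k + 2 + 1) := rfl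
    have h3 : Nat.fib (k + 2) = Nat.fib k + Nat.fib (k + 1) := Nat.fib_add_two
    omega

lemma lucasZ_eq (n : ℤ) : lucasZ n = fibZ (n + 1) + fibZ (n - 1) := by
  rcases le_or_gt 1 n with h | h
  · obtain ⟨k, rfl⟩ : ∃ k : ℕ, n = (k : ℤ) + 1 := ⟨(n - 1).toNat, by omega⟩
    have hpos : (0 : ℤ) ≤ (k : ℤ) + 1 := by omega
    rw [lucasZ, if_pos hpos, show ((k : ℤ) + 1).toNat = k + 1 by omega,
      show (k : ℤ) + 1 + 1 = ((k + 2 : ℕ) : ℤ) by push_cast; ring,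
      show (k : ℤ) + 1 - 1 = ((k : ℕ) : ℤ) by push_cast; ring,
      fibZ_natCast, fibZ_natCast, lucas_succ]
    push_cast; ring
  · rcases eq_or_lt_of_le (show n ≤ 0 by omega) with h0 | h0
    · subst h0
      rw [lucasZ, if_pos le_rfl, show (0 : ℤ) + 1 = ((1 : ℕ) : ℤ) by norm_num,
        fibZ_natCast, show (0 : ℤ) - 1 = -(((0 : ℕ) : ℤ)) - 1 by norm_num, fibZ_neg]
      show ((lucas 0 : ℕ) : ℤ) = _
      norm_num [lucas]
    · rcases eq_or_lt_of_le (show n ≤ -1 by omega) with h1 | h1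
      · subst h1
        rw [lucasZ, if_neg (by norm_num), show ((-1 : ℤ)).natAbs = 1 by decide,
          show (-1 : ℤ) + 1 = ((0 : ℕ) : ℤ) by norm_num, fibZ_natCast,
          show (-1 : ℤ) - 1 = -(((1 : ℕ) : ℤ)) - 1 by norm_num, fibZ_neg]
        norm_num [lucas]
      · obtain ⟨j, rfl⟩ : ∃ j : ℕ, n = -((j : ℤ)) - 2 := ⟨(-n - 2).toNat, by omega⟩
        have hneg : ¬ (0 ≤ -((j : ℤ)) - 2) := by omega
        rw [lucasZ, if_neg hneg, show (-((j : ℤ)) - 2).natAbs = j + 2 by omega,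
          show -((j : ℤ)) - 2 + 1 = -((j : ℕ) : ℤ) - 1 by push_cast; ring,
          show -((j : ℤ)) - 2 - 1 = -(((j + 2 : ℕ)) : ℤ) - 1 by push_cast; ring,
          fibZ_neg, fibZ_neg]
        have hluc : lucas (j + 2) = Nat.fib (j + 3) + Nat.fib (j + 1) := lucas_succ (j + 1)
        have hfib : Nat.fib (j + 2 + 1) = Nat.fib (j + 3) := rfl
        rw [hluc, hfib]
        push_cast; ring

lemma lemB (k : ℤ) : lucasZ k ^ 2 - 5 * fibZ k ^ 2 = 4 * E k := by
  rw [lucasZ_eq]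
  have h := cassini k
  have hr := fibZ_rec k
  linear_combination 4 * h + (fibZ (k + 1) - fibZ (k - 1) + fibZ k) * hr

lemma lemA (m n : ℤ) :
    2 * lucasZ (m + n) = lucasZ m * lucasZ n + 5 * fibZ m * fibZ n := by
  rw [lucasZ_eq (m + n), lucasZ_eq m, lucasZ_eq n]
  have h1 := fib_add (n + 1) m
  rw [show m + (n + 1) = m + n + 1 by ring] at h1
  have h2 := fib_add (n - 1) m
  rw [show m + (n - 1) = m + n - 1 by ring, show n - 1 + 1 = n by ring] at h2
  have hm : fibZ (m + 1) = fibZ m + fibZ (m - 1) := fibZ_rec m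
  have hn2 : fibZ (n + 2) = fibZ (n + 1) + fibZ n := fibZ_rec' n
  have hn1 : fibZ (n - 1) = fibZ (n + 1) - fibZ n := by
    have := fibZ_rec n; linarith
  rw [h1, h2, hm, show n + 1 + 1 = n + 2 by ring, hn2, hn1]
  ring

theorem stmt11 (n m : ℤ) :
    (((-1 : ℤˣ) ^ n : ℤˣ) : ℤ) * lucasZ n ^ 2 + (((-1 : ℤˣ) ^ m : ℤˣ) : ℤ) * lucasZ m ^ 2 +
      (((-1 : ℤˣ) ^ (m + n) : ℤˣ) : ℤ) * lucasZ (m + n) ^ 2 =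
    (((-1 : ℤˣ) ^ (m + n) : ℤˣ) : ℤ) * lucasZ n * lucasZ m * lucasZ (m + n) + 4 := by
  show E n * lucasZ n ^ 2 + E m * lucasZ m ^ 2 + E (m + n) * lucasZ (m + n) ^ 2 =
    E (m + n) * lucasZ n * lucasZ m * lucasZ (m + n) + 4
  rw [E_add m n]
  have hA := lemA m n
  have hBn := lemB n
  have hBm := lemB m
  have hsn := E_sq n
  have hsm := E_sq m
  set x := lucasZ n
  set y := lucasZ m
  set z := lucasZ (m + n)
  set u := fibZ n
  set v := fibZ m
  have key : 4 * (E n * x ^ 2 + E m * y ^ 2 + E m * E n * z ^ 2) =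
      4 * (E m * E n * x * y * z + 4) := by
    linear_combination (E m * E n * (2 * z - x * y + 5 * u * v)) * hA
      - 5 * E m * E n * v ^ 2 * hBn - E m * E n * (x ^ 2 - 4 * E n) * hBm
      - 4 * E n * x ^ 2 * hsm - 4 * E m * y ^ 2 * hsn
      + 16 * (E m) ^ 2 * hsn + 16 * hsm
  linarith
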